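/- arXiv:2210.08848 — 7 statements merged into one kernel-verified Lean document; each statement's English description precedes it below -/
import Mathlib

section
/- Let z* > 0, C > 0, and let f : (0, ∞) → ℝ be continuous, concave on [z*, ∞) and strictly concave there, with f(z*) = C z*, f(z) ≤ C z for all z > 0, and f(z) < C z for z ∈ (0, z*). Let V(z) = C z for z ∈ (0, z*] and V(z) = f(z) for z ≥ z*. Suppose A ≥ 0 and z̄ > 0 satisfy: A z ≥ V(z) for all z ∈ (0, z̄), and A z̄ = f(z̄) with z̄ ≥ z*. Then A = C and z̄ = z*. -/
/-- If the line `z ↦ A z` dominates the stand-alone value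
`V(z) = max-type gluing of C z on (0,z*] and the strictly concave f on [z*,∞)`
on `(0, z̄)` and touches `f` at `z̄ ≥ z*`, then `A = C` and `z̄ = z*`. -/
theorem line_dominating_value_touches_at_zstar
    (zstar C : ℝ) (hzstar : 0 < zstar) (hC : 0 < C)
    (f : ℝ → ℝ)
    (hfcont : ContinuousOn f (Set.Ioi 0))
    (hfconc : ConcaveOn ℝ (Set.Ici zstar) f)
    (hfstrict : StrictConcaveOn ℝ (Set.Ici zstar) f)
    (heq : f zstar = C * zstar)
    (hle : ∀ z ∈ Set.Ioi (0:ℝ), f z ≤ C * z)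
    (hlt : ∀ z ∈ Set.Ioo 0 zstar, f z < C * z)
    (V : ℝ → ℝ)
    (hV1 : ∀ z ∈ Set.Ioc 0 zstar, V z = C * z)
    (hV2 : ∀ z ∈ Set.Ici zstar, V z = f z)
    (A zbar : ℝ) (hA : 0 ≤ A) (hzbar : 0 < zbar)
    (hdom : ∀ z ∈ Set.Ioo 0 zbar, V z ≤ A * z)
    (htouch : A * zbar = f zbar) (hge : zstar ≤ zbar) :
    A = C ∧ zbar = zstar := by
  -- C ≤ A : test at z = zstar/2
  have hz2 : (0:ℝ) < zstar / 2 := by linarith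
  have hz2lt : zstar / 2 < zbar := by linarith
  have hVz2 : V (zstar / 2) = C * (zstar / 2) :=
    hV1 _ ⟨hz2, by linarith⟩
  have hCA : C ≤ A := by
    have := hdom (zstar / 2) ⟨hz2, hz2lt⟩
    rw [hVz2] at this
    nlinarith
  have hAC : A ≤ C := by
    have h1 : f zbar ≤ C * zbar := hle _ (by exact lt_of_lt_of_le hzstar hge)
    nlinarith [htouch]
  have hACeq : A = C := le_antisymm hAC hCA
  refine ⟨hACeq, ?_⟩
  by_contra hne
  have hlt' : zstar < zbar := lt_of_le_of_ne hge (Ne.symm hne)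
  have hfb : f zbar = C * zbar := by rw [← htouch, hACeq]
  have hmid := hfstrict.2 (Set.self_mem_Ici) (Set.mem_Ici.mpr hge)
      (ne_of_lt hlt') (by norm_num : (0:ℝ) < 1/2) (by norm_num : (0:ℝ) < 1/2) (by norm_num)
  have hmpos : (0:ℝ) < (1/2 : ℝ) * zstar + (1/2 : ℝ) * zbar := by nlinarith
  have hmle := hle _ (Set.mem_Ioi.mpr hmpos)
  simp only [smul_eq_mul] at hmid
  rw [heq, hfb] at hmid
  nlinarith
end

section
/- Let C > 0 and let (u_n)_{n≥1} be a sequence of strictly positive reals with u_n → 0 such that u_{n+1}² + C u_{n+1}³ ≥ u_n² − C u_n³ for all n. Then ∑_{n≥1} u_n = ∞. -/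
lemma gap_key (C a b : ℝ) (hC : 0 < C) (ha : 0 < a) (ha6 : C * a ≤ 1/6)
    (hb : 0 < b) (h : a^2 - C*a^3 ≤ b^2 + C*b^3) : 1/b ≤ 1/a + 2*C := by
  have hkey : a ≤ b * (1 + 2*C*a) := by
    by_contra hlt
    push_neg at hlt
    have hD : (0:ℝ) < 1 + 2*C*a := by positivity
    have hbD : 0 < b * (1 + 2*C*a) := mul_pos hb hD
    have h2 : (b*(1 + 2*C*a))^2 < a^2 := by nlinarith
    have h3 : (b*(1 + 2*C*a))^3 < a^3 := by nlinarith
    have h4 : (a^2 - C*a^3) * (1 + 2*C*a)^3 ≤ (b^2 + C*b^3) * (1 + 2*C*a)^3 :=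
      mul_le_mul_of_nonneg_right h (by positivity)
    have h5 : (b^2 + C*b^3) * (1 + 2*C*a)^3
        = (b*(1 + 2*C*a))^2 * (1 + 2*C*a) + C * (b*(1 + 2*C*a))^3 := by ring
    have h6 : (a^2 - C*a^3) * (1 + 2*C*a)^3 < a^2 * (1 + 2*C*a) + C * a^3 := by
      nlinarith
    have hx : 0 < C*a := mul_pos hC ha
    nlinarith [mul_nonneg (by linarith : (0:ℝ) ≤ 1/6 - C*a) (by positivity : (0:ℝ) ≤ (C*a)^2 * a^2),
      mul_nonneg (by linarith : (0:ℝ) ≤ 1/6 - C*a) (by positivity : (0:ℝ) ≤ (C*a)^3 * a^2),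
      mul_pos hx (mul_pos ha ha), mul_pos (mul_pos hx hx) (mul_pos ha ha)]
  have h1 : 1/b ≤ (1 + 2*C*a)/a := by
    rw [div_le_div_iff₀ hb ha]
    nlinarith
  calc 1/b ≤ (1 + 2*C*a)/a := h1
    _ = 1/a + 2*C := by field_simp

/-- If positive reals `u_n → 0` satisfy `u_{n+1}² + C u_{n+1}³ ≥ u_n² − C u_n³`,
then `∑ u_n = ∞`. -/
theorem gap_sequence_not_summable
    (C : ℝ) (hC : 0 < C) (u : ℕ → ℝ)
    (hpos : ∀ n, 0 < u n)
    (hlim : Filter.Tendsto u Filter.atTop (nhds 0))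
    (hrec : ∀ n, (u n)^2 - C * (u n)^3 ≤ (u (n+1))^2 + C * (u (n+1))^3) :
    Filter.Tendsto (fun N => ∑ n ∈ Finset.range N, u n)
      Filter.atTop Filter.atTop := by
  rw [← not_summable_iff_tendsto_nat_atTop_of_nonneg (fun n => (hpos n).le)]
  intro hsum
  -- choose N with u n < 1/(6C) for all n ≥ N
  have hsmall : ∀ᶠ n in Filter.atTop, u n < 1/(6*C) := by
    have : Set.Iio (1/(6*C)) ∈ nhds (0:ℝ) := Iio_mem_nhds (by positivity)
    exact hlim.eventually this
  obtain ⟨N, hN⟩ := Filter.eventually_atTop.mp hsmall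
  set A : ℝ := 1 / u N with hA
  have hA0 : 0 < A := by rw [hA]; exact one_div_pos.mpr (hpos N)
  -- reciprocal grows linearly
  have hlin : ∀ k : ℕ, 1 / u (k + N) ≤ A + 2*C*k := by
    intro k
    induction k with
    | zero => simp [hA]
    | succ k ih =>
      have ha6 : C * u (k + N) ≤ 1/6 := by
        have := hN (k + N) (Nat.le_add_left N k)
        calc C * u (k + N) ≤ C * (1/(6*C)) :=
              mul_le_mul_of_nonneg_left this.le hC.le
          _ = 1/6 := by field_simp
      have := gap_key C (u (k + N)) (u (k + N + 1)) hC (hpos _) ha6 (hpos _)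
        (hrec (k + N))
      have hcast : ((k+1 : ℕ) : ℝ) = (k : ℝ) + 1 := by push_cast; ring
      calc 1 / u (k + 1 + N) = 1 / u (k + N + 1) := by ring_nf
        _ ≤ 1 / u (k + N) + 2*C := this
        _ ≤ A + 2*C*k + 2*C := by linarith
        _ = A + 2*C*((k:ℝ)+1) := by ring
        _ = A + 2*C*((k+1:ℕ):ℝ) := by rw [hcast]
  -- hence a harmonic-type lower bound
  have hlow : ∀ k : ℕ, 1 / (A + 2*C*k) ≤ u (k + N) := by
    intro k
    have h1 : 0 < 1 / u (k + N) := one_div_pos.mpr (hpos _)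
    have := one_div_le_one_div_of_le h1 (hlin k)
    rwa [one_div_one_div] at this
  have hsum1 : Summable (fun k : ℕ => u (k + N)) := (summable_nat_add_iff N).mpr hsum
  have hsum2 : Summable (fun k : ℕ => 1 / (A + 2*C*k)) :=
    hsum1.of_nonneg_of_le (fun k => le_of_lt (one_div_pos.mpr (add_pos_of_pos_of_nonneg hA0 (by positivity)))) hlow
  have hsum3 : Summable (fun k : ℕ => (1/(A + 2*C)) * (1 / ((k:ℝ)+1))) := by
    refine hsum2.of_nonneg_of_le (fun k => mul_nonneg (le_of_lt (one_div_pos.mpr (add_pos hA0 (by linarith)))) (by positivity)) (fun k => ?_)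
    have hd1 : (0:ℝ) < A + 2*C*k := add_pos_of_pos_of_nonneg hA0 (by positivity)
    rw [show (1/(A + 2*C)) * (1 / ((k:ℝ)+1)) = 1 / ((A + 2*C) * ((k:ℝ)+1)) by
      rw [one_div_mul_one_div]]
    apply one_div_le_one_div_of_le hd1
    have : (0:ℝ) ≤ A * k := by positivity
    nlinarith
  have hsum4 : Summable (fun k : ℕ => 1 / ((k:ℝ)+1)) := by
    have hne : (1/(A + 2*C)) ≠ 0 := ne_of_gt (one_div_pos.mpr (add_pos hA0 (by linarith)))
    exact (summable_mul_left_iff hne).mp hsum3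
  have hsum5 : Summable (fun k : ℕ => 1 / (k:ℝ)) := by
    rw [← summable_nat_add_iff 1]
    convert hsum4 using 2 with k
    · rfl
    push_cast
    ring
  exact Real.not_summable_one_div_natCast hsum5
end

section
/- Let C > 0 and h(u) = u² + C u³ for u ≥ 0, and let h⁻¹ denote the inverse of h restricted to [0, ∞). Then h⁻¹(z) = √z − (C/2) z + o(z) as z → 0⁺; that is, (h⁻¹(z) − √z + (C/2) z)/z → 0 as z → 0⁺. -/
/-- Asymptotic expansion `h⁻¹(z) = √z − (C/2) z + o(z)` as `z → 0⁺` for the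
inverse of `h(u) = u² + C u³` on `[0,∞)`. -/
theorem inverse_of_cubic_perturbation_asymptotics
    (C : ℝ) (hC : 0 < C) (hinv : ℝ → ℝ)
    (hinv_nonneg : ∀ z ≥ (0:ℝ), 0 ≤ hinv z)
    (hinv_right : ∀ z ≥ (0:ℝ), (hinv z)^2 + C * (hinv z)^3 = z) :
    Filter.Tendsto (fun z => (hinv z - Real.sqrt z + C / 2 * z) / z)
      (nhdsWithin 0 (Set.Ioi 0)) (nhds 0) := by
  have key : ∀ t : ℝ, 0 ≤ t → t ≤ 8 → |1 + t/2 - Real.sqrt (1+t)| ≤ t^2/8 := by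
    intro t ht ht8
    have hs0 : 0 ≤ Real.sqrt (1+t) := Real.sqrt_nonneg _
    have hs : Real.sqrt (1+t) ^ 2 = 1 + t := Real.sq_sqrt (by linarith)
    rw [abs_le]
    constructor
    · nlinarith [sq_nonneg (Real.sqrt (1+t) - (1+t/2)), sq_nonneg (Real.sqrt (1+t) + (1+t/2))]
    · nlinarith [sq_nonneg (Real.sqrt (1+t) - (1+t/2-t^2/8)),
        sq_nonneg (Real.sqrt (1+t) + (1+t/2-t^2/8)), sq_nonneg t, sq_nonneg (t*(8-t))]
  have hC2 : (0:ℝ) < 64 / C^2 := by positivity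
  apply squeeze_zero_norm' (a := fun z => 5*C^2/8 * Real.sqrt z)
  · filter_upwards [Ioo_mem_nhdsGT_of_mem ⟨le_refl (0:ℝ), hC2⟩] with z hz
    obtain ⟨hz0, hz1⟩ := hz
    have hu0 : 0 ≤ hinv z := hinv_nonneg z hz0.le
    have heq : (hinv z)^2 + C*(hinv z)^3 = z := hinv_right z hz0.le
    set u := hinv z with hu
    have hu2 : u^2 ≤ z := by nlinarith [mul_nonneg hC.le (pow_nonneg hu0 3)]
    have husz : u ≤ Real.sqrt z := by
      rw [show u = Real.sqrt (u^2) from (Real.sqrt_sq hu0).symm]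
      exact Real.sqrt_le_sqrt hu2
    have hsz : Real.sqrt z ≤ 8 / C := by
      rw [show (8:ℝ)/C = Real.sqrt ((8/C)^2) from (Real.sqrt_sq (by positivity)).symm]
      apply Real.sqrt_le_sqrt
      rw [div_pow]
      have : z < 64 / C^2 := hz1
      nlinarith
    have ht8 : C * u ≤ 8 := by
      have h1 : u ≤ 8 / C := husz.trans hsz
      calc C*u ≤ C*(8/C) := by nlinarith
        _ = 8 := by field_simp
    have hzeq : z = u^2 * (1 + C*u) := by linear_combination -heq
    have hsqz : Real.sqrt z = u * Real.sqrt (1 + C*u) := by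
      rw [hzeq, Real.sqrt_mul (sq_nonneg u), Real.sqrt_sq hu0]
    have hkey := key (C*u) (by positivity) ht8
    have hN : |u - Real.sqrt z + C/2*z| ≤ 5*C^2/8 * u^3 := by
      have hre : u - Real.sqrt z + C/2*z
          = u*(1 + (C*u)/2 - Real.sqrt (1+C*u)) + C^2/2*u^3 := by
        rw [hsqz, ← heq]; ring
      rw [hre]
      have h1 : |u*(1 + (C*u)/2 - Real.sqrt (1+C*u))| ≤ u * ((C*u)^2/8) := by
        rw [abs_mul, abs_of_nonneg hu0]
        exact mul_le_mul_of_nonneg_left hkey hu0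
      have h2 : |C^2/2*u^3| = C^2/2*u^3 := abs_of_nonneg (by positivity)
      calc |u*(1 + (C*u)/2 - Real.sqrt (1+C*u)) + C^2/2*u^3|
          ≤ |u*(1 + (C*u)/2 - Real.sqrt (1+C*u))| + |C^2/2*u^3| := abs_add_le _ _
        _ ≤ u * ((C*u)^2/8) + C^2/2*u^3 := by rw [h2]; linarith
        _ = 5*C^2/8 * u^3 := by ring
    rw [Real.norm_eq_abs, abs_div, abs_of_pos hz0, div_le_iff₀ hz0]
    calc |u - Real.sqrt z + C/2*z| ≤ 5*C^2/8 * u^3 := hN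
      _ ≤ 5*C^2/8 * Real.sqrt z * z := by
          have h3 : u * u^2 ≤ Real.sqrt z * z :=
            mul_le_mul husz hu2 (sq_nonneg u) (Real.sqrt_nonneg z)
          nlinarith [sq_nonneg C]
  · have h0 : Filter.Tendsto (fun z : ℝ => 5*C^2/8 * Real.sqrt z) (nhds 0) (nhds 0) := by
      have := (Real.continuous_sqrt.tendsto 0).const_mul (5*C^2/8)
      simpa using this
    exact h0.mono_left nhdsWithin_le_nhds
end

section
/- Let y₁ ∈ ℝ and let f, g : [y₁, ∞) → ℝ be C² with f'' < 0 and g'' < 0 on [y₁, ∞), and with f'' and g'' locally Lipschitz. Suppose (y_n)_{n≥1} is a strictly increasing sequence in [y₁, ∞) such that for every n ≥ 1: (a) the tangent lines of f at y_{2n−1} and at y_{2n+1} intersect at abscissa y_{2n}, i.e. f(y_{2n−1}) + f'(y_{2n−1})(y_{2n} − y_{2n−1}) = f(y_{2n+1}) + f'(y_{2n+1})(y_{2n} − y_{2n+1}); and (b) the tangent lines of g at y_{2n} and at y_{2n+2} intersect at abscissa y_{2n+1}. Then the sequence (y_n) is unbounded, i.e. sup_n y_n = ∞. -/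
open Set intervalIntegral Filter

set_option maxHeartbeats 1000000 in
lemma key_tangent (y₁ m K a b x : ℝ) (h h' h'' : ℝ → ℝ)
    (hd1 : ∀ s ∈ Set.Ioi y₁, HasDerivAt h (h' s) s)
    (hd2 : ∀ s ∈ Set.Ioi y₁, HasDerivAt h' (h'' s) s)
    (hc : ContinuousOn h'' (Set.Icc a b))
    (hya : y₁ < a) (hab : a < b) (hm : 0 < m)
    (hneg : ∀ s ∈ Set.Icc a b, h'' s ≤ -m)
    (hKl : ∀ s ∈ Set.Icc a b, ∀ t ∈ Set.Icc a b, |h'' s - h'' t| ≤ K * |s - t|)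
    (heq : h a + h' a * (x - a) = h b + h' b * (x - b)) :
    |x - (a+b)/2| ≤ K * (b-a)^2 / (12*m) := by
  have hab' : a ≤ b := hab.le
  have hsub : Set.Icc a b ⊆ Set.Ioi y₁ := fun s hs => lt_of_lt_of_le hya hs.1
  have huIcc : Set.uIcc a b = Set.Icc a b := Set.uIcc_of_le hab'
  set c : ℝ := (a+b)/2 with hc_def
  have hcmem : c ∈ Set.Icc a b := Set.mem_Icc.mpr ⟨by rw [hc_def]; linarith, by rw [hc_def]; linarith⟩
  have hint1 : IntervalIntegrable h'' MeasureTheory.volume a b := by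
    apply ContinuousOn.intervalIntegrable; rwa [huIcc]
  have hcont2 : ContinuousOn (fun s => h'' s * (c - s)) (Set.Icc a b) :=
    hc.mul ((continuous_const.sub continuous_id).continuousOn)
  have hint2 : IntervalIntegrable (fun s => h'' s * (c - s)) MeasureTheory.volume a b := by
    apply ContinuousOn.intervalIntegrable; rwa [huIcc]
  have hint3 : IntervalIntegrable (fun s => (h'' s - h'' c) * (c - s)) MeasureTheory.volume a b := by
    apply ContinuousOn.intervalIntegrable; rw [huIcc]
    exact (hc.sub continuousOn_const).mul ((continuous_const.sub continuous_id).continuousOn)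
  have hint4 : IntervalIntegrable (fun s => K * (s - c)^2) MeasureTheory.volume a b :=
    (Continuous.intervalIntegrable (by fun_prop) a b)
  have I1 : ∫ s in a..b, h'' s = h' b - h' a := by
    apply integral_eq_sub_of_hasDerivAt
    · intro s hs; exact hd2 s (hsub (huIcc ▸ hs))
    · exact hint1
  have I2 : ∫ s in a..b, h'' s * (c - s)
      = (h' b * (c - b) + h b) - (h' a * (c - a) + h a) := by
    apply integral_eq_sub_of_hasDerivAt (f := fun s => h' s * (c - s) + h s)
    · intro s hs
      have hs' : s ∈ Set.Ioi y₁ := hsub (huIcc ▸ hs)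
      have := ((hd2 s hs').mul ((hasDerivAt_id s).const_sub c)).add (hd1 s hs')
      convert this using 1
      · funext x; simp
      · simp only [id_eq]; ring
    · exact hint2
  have I3 : ∫ s in a..b, K * (s - c)^2 = K * (b-a)^3 / 12 := by
    have : ∫ s in a..b, K * (s - c)^2 = (K/3 * (b-c)^3) - (K/3 * (a-c)^3) := by
      apply integral_eq_sub_of_hasDerivAt (f := fun s => K/3 * (s - c)^3)
      · intro s _
        have := (((hasDerivAt_id s).sub_const c).pow 3).const_mul (K/3)
        refine this.congr_deriv ?_; simp only [id_eq]; ring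
      · exact hint4
    rw [this, hc_def]; ring
  have I4 : ∫ s in a..b, (c - s) = 0 := by
    have : ∫ s in a..b, (c - s) = (-(b-c)^2/2) - (-(a-c)^2/2) := by
      apply integral_eq_sub_of_hasDerivAt (f := fun s => -(s - c)^2/2)
      · intro s _
        have := ((((hasDerivAt_id s).sub_const c).pow 2).neg.div_const 2)
        refine this.congr_deriv ?_; simp only [id_eq]; ring
      · exact (Continuous.intervalIntegrable (by fun_prop) a b)
    rw [this, hc_def]; ring
  have I5 : ∫ s in a..b, h'' s * (c - s)
      = ∫ s in a..b, (h'' s - h'' c) * (c - s) := by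
    have : ∫ s in a..b, (h'' s - h'' c) * (c - s)
        = (∫ s in a..b, h'' s * (c - s)) - h'' c * ∫ s in a..b, (c - s) := by
      rw [← intervalIntegral.integral_const_mul, ← intervalIntegral.integral_sub hint2]
      · congr 1; ext s; ring
      · exact (Continuous.intervalIntegrable (by fun_prop) a b)
    rw [this, I4]; ring
  have hpt : ∀ s ∈ Set.Icc a b, |(h'' s - h'' c) * (c - s)| ≤ K * (s - c)^2 := by
    intro s hs
    rw [abs_mul]
    calc |h'' s - h'' c| * |c - s| ≤ (K * |s - c|) * |c - s| :=
          mul_le_mul_of_nonneg_right (hKl s hs c hcmem) (abs_nonneg _)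
      _ = K * (s - c)^2 := by
          rw [abs_sub_comm c s, mul_assoc, ← abs_mul, ← sq, abs_of_nonneg (sq_nonneg _)]
  have I6 : |∫ s in a..b, h'' s * (c - s)| ≤ K * (b-a)^3 / 12 := by
    rw [I5, ← I3, abs_le]
    constructor
    · have : ∫ s in a..b, (-(K * (s - c)^2)) ≤ ∫ s in a..b, (h'' s - h'' c) * (c - s) := by
        apply intervalIntegral.integral_mono_on hab' hint4.neg hint3
        intro s hs; exact (abs_le.mp (hpt s hs)).1
      rwa [intervalIntegral.integral_neg] at this
    · apply intervalIntegral.integral_mono_on hab' hint3 hint4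
      intro s hs; exact (abs_le.mp (hpt s hs)).2
  have I7 : m * (b - a) ≤ h' a - h' b := by
    have h0 : ∫ s in a..b, h'' s ≤ ∫ s in a..b, (-m : ℝ) := by
      apply intervalIntegral.integral_mono_on hab' hint1 (intervalIntegrable_const)
      exact hneg
    rw [I1, intervalIntegral.integral_const] at h0
    have : h' b - h' a ≤ (b - a) * (-m) := by simpa using h0
    nlinarith
  have I8 : (x - c) * (h' a - h' b) = (h' b * (c - b) + h b) - (h' a * (c - a) + h a) := by
    linear_combination heq
  have hD : 0 < h' a - h' b := lt_of_lt_of_le (mul_pos hm (sub_pos.mpr hab)) I7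
  have hfin : |x - c| * (m * (b - a)) ≤ K * (b-a)^3 / 12 := by
    calc |x - c| * (m * (b - a)) ≤ |x - c| * (h' a - h' b) :=
          mul_le_mul_of_nonneg_left I7 (abs_nonneg _)
      _ = |(x - c) * (h' a - h' b)| := by rw [abs_mul, abs_of_pos hD]
      _ = |∫ s in a..b, h'' s * (c - s)| := by rw [I8, I2]
      _ ≤ K * (b-a)^3 / 12 := I6
  rw [le_div_iff₀ (by positivity : (0:ℝ) < 12*m)]
  nlinarith [hfin, sub_pos.mpr hab, abs_nonneg (x - c)]


private lemma aux_step_upper (A a b : ℝ) (p0 : 0 < a) (p1 : 0 < b)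
    (h2 : A * a ≤ 1/8) (h3 : A * b ≤ 1/8) (hΔ : b - a ≤ A * (a^2 + b^2)) :
    b ≤ 2 * a := by
  nlinarith [mul_le_mul_of_nonneg_right h2 p0.le, mul_le_mul_of_nonneg_right h3 p1.le]

private lemma aux_step_lower (A a b : ℝ) (hA0 : 0 ≤ A) (p1 : 0 < b)
    (hup : b ≤ 2 * a) (hΔ : -(A * (a^2 + b^2)) ≤ b - a) :
    a * (1 - A * (a + 2*b)) ≤ b := by
  nlinarith [mul_le_mul_of_nonneg_left hup (mul_nonneg hA0 p1.le)]

private lemma aux_prod_step (c E e : ℝ) (hc : 0 ≤ c) (hE : 0 ≤ E) (he : 0 ≤ e) :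
    c * (1 - (E + e)) ≤ c * (1 - E) * (1 - e) := by
  nlinarith [mul_nonneg (mul_nonneg hc hE) he]

private lemma aux_Atau (A τ : ℝ) (hτ0 : 0 ≤ τ) (h1 : τ * (8*A+1) < 1) : A * τ ≤ 1/8 := by
  nlinarith

set_option maxHeartbeats 2000000 in
/-- The intertwined tangency-point recursion for two strictly concave C²
functions with locally Lipschitz second derivatives cannot stay bounded:
the sequence of thresholds is unbounded. -/
theorem tangency_recursion_unbounded
    (y₁ : ℝ) (f f' f'' g g' g'' : ℝ → ℝ)
    (hf1 : ∀ x ∈ Set.Ici y₁, HasDerivWithinAt f (f' x) (Set.Ici y₁) x)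
    (hf2 : ∀ x ∈ Set.Ici y₁, HasDerivWithinAt f' (f'' x) (Set.Ici y₁) x)
    (hg1 : ∀ x ∈ Set.Ici y₁, HasDerivWithinAt g (g' x) (Set.Ici y₁) x)
    (hg2 : ∀ x ∈ Set.Ici y₁, HasDerivWithinAt g' (g'' x) (Set.Ici y₁) x)
    (hf2c : ContinuousOn f'' (Set.Ici y₁))
    (hg2c : ContinuousOn g'' (Set.Ici y₁))
    (hfneg : ∀ x ∈ Set.Ici y₁, f'' x < 0)
    (hgneg : ∀ x ∈ Set.Ici y₁, g'' x < 0)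
    (hfL : ∀ x ∈ Set.Ici y₁, ∃ ε > (0:ℝ), ∃ K : NNReal,
      LipschitzOnWith K f'' (Set.Icc (x - ε) (x + ε) ∩ Set.Ici y₁))
    (hgL : ∀ x ∈ Set.Ici y₁, ∃ ε > (0:ℝ), ∃ K : NNReal,
      LipschitzOnWith K g'' (Set.Icc (x - ε) (x + ε) ∩ Set.Ici y₁))
    (y : ℕ → ℝ)
    (hy1 : y 1 = y₁)
    (hmem : ∀ n, 1 ≤ n → y₁ ≤ y n)
    (hmono : ∀ n, 1 ≤ n → y n < y (n + 1))
    (ha : ∀ n : ℕ, 1 ≤ n →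
      f (y (2*n - 1)) + f' (y (2*n - 1)) * (y (2*n) - y (2*n - 1))
        = f (y (2*n + 1)) + f' (y (2*n + 1)) * (y (2*n) - y (2*n + 1)))
    (hb : ∀ n : ℕ, 1 ≤ n →
      g (y (2*n)) + g' (y (2*n)) * (y (2*n + 1) - y (2*n))
        = g (y (2*n + 2)) + g' (y (2*n + 2)) * (y (2*n + 1) - y (2*n + 2))) :
    ∀ M : ℝ, ∃ n : ℕ, M < y n := by
  by_contra hcon
  push_neg at hcon
  obtain ⟨M, hM⟩ := hcon
  have hf1' : ∀ s ∈ Set.Ioi y₁, HasDerivAt f (f' s) s := fun s hs =>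
    (hf1 s (show y₁ ≤ s from le_of_lt hs)).hasDerivAt (Ici_mem_nhds hs)
  have hf2' : ∀ s ∈ Set.Ioi y₁, HasDerivAt f' (f'' s) s := fun s hs =>
    (hf2 s (show y₁ ≤ s from le_of_lt hs)).hasDerivAt (Ici_mem_nhds hs)
  have hg1' : ∀ s ∈ Set.Ioi y₁, HasDerivAt g (g' s) s := fun s hs =>
    (hg1 s (show y₁ ≤ s from le_of_lt hs)).hasDerivAt (Ici_mem_nhds hs)
  have hg2' : ∀ s ∈ Set.Ioi y₁, HasDerivAt g' (g'' s) s := fun s hs =>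
    (hg2 s (show y₁ ≤ s from le_of_lt hs)).hasDerivAt (Ici_mem_nhds hs)
  obtain ⟨z, hz⟩ : ∃ z : ℕ → ℝ, z = fun n => y (n+1) := ⟨_, rfl⟩
  have hzmono : StrictMono z := strictMono_nat_of_lt_succ fun n => by
    rw [hz]; exact hmono (n+1) (by omega)
  have hbdd : BddAbove (Set.range z) := ⟨M, by rintro _ ⟨n, rfl⟩; rw [hz]; exact hM (n+1)⟩
  obtain ⟨L, hLdef⟩ : ∃ L : ℝ, L = ⨆ n, z n := ⟨_, rfl⟩
  have htend : Tendsto z atTop (nhds L) := by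
    rw [hLdef]; exact tendsto_atTop_ciSup hzmono.monotone hbdd
  have hzle : ∀ n, z n ≤ L := by intro n; rw [hLdef]; exact le_ciSup hbdd n
  have hyz : ∀ n, 1 ≤ n → y n = z (n-1) := by
    intro n hn
    have h1 : n - 1 + 1 = n := by omega
    rw [hz]; simp only [h1]
  have hyle : ∀ n, 1 ≤ n → y n ≤ L := fun n hn => by rw [hyz n hn]; exact hzle _
  have hy₁L : y₁ ≤ L := by rw [← hy1]; exact hyle 1 le_rfl
  have hLmem : L ∈ Set.Ici y₁ := hy₁L
  have hyy : ∀ i j, 1 ≤ i → i ≤ j → y i ≤ y j := by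
    intro i j hi hij
    rw [hyz i hi, hyz j (le_trans hi hij)]
    exact hzmono.monotone (by omega)
  have hfnegL := hfneg L hLmem
  have hgnegL := hgneg L hLmem
  obtain ⟨εf, hεf, Kf, hKf⟩ := hfL L hLmem
  obtain ⟨εg, hεg, Kg, hKg⟩ := hgL L hLmem
  have hcf := hf2c L hLmem
  rw [Metric.continuousWithinAt_iff] at hcf
  obtain ⟨δf, hδf, hclosef⟩ := hcf (-f'' L / 2) (by linarith)
  have hcg := hg2c L hLmem
  rw [Metric.continuousWithinAt_iff] at hcg
  obtain ⟨δg, hδg, hcloseg⟩ := hcg (-g'' L / 2) (by linarith)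
  obtain ⟨m, hmdef⟩ : ∃ m : ℝ, m = min (-f'' L / 2) (-g'' L / 2) := ⟨_, rfl⟩
  have hm0 : 0 < m := by rw [hmdef]; exact lt_min (by linarith) (by linarith)
  obtain ⟨K, hKdef⟩ : ∃ K : ℝ, K = max (Kf:ℝ) (Kg:ℝ) := ⟨_, rfl⟩
  have hK0 : (0:ℝ) ≤ K := by rw [hKdef]; exact le_trans Kf.coe_nonneg (le_max_left _ _)
  obtain ⟨δ, hδdef⟩ : ∃ δ : ℝ, δ = min (min δf δg) (min εf εg) := ⟨_, rfl⟩
  have hδ0 : 0 < δ := by rw [hδdef]; exact lt_min (lt_min hδf hδg) (lt_min hεf hεg)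
  -- second derivative bounds on the region
  have hfm : ∀ s, L - δ < s → s ≤ L → y₁ ≤ s → f'' s ≤ -m := by
    intro s h1 h2 h3
    have hdist : dist s L < δf := by
      rw [Real.dist_eq, abs_of_nonpos (by linarith)]
      have : δ ≤ δf := by rw [hδdef]; exact le_trans (min_le_left _ _) (min_le_left _ _)
      linarith
    have hcl := hclosef h3 hdist
    rw [Real.dist_eq] at hcl
    have hcl2 := (abs_lt.mp hcl).2
    have hmle : m ≤ -f'' L / 2 := by rw [hmdef]; exact min_le_left _ _
    linarith
  have hgm : ∀ s, L - δ < s → s ≤ L → y₁ ≤ s → g'' s ≤ -m := by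
    intro s h1 h2 h3
    have hdist : dist s L < δg := by
      rw [Real.dist_eq, abs_of_nonpos (by linarith)]
      have : δ ≤ δg := by rw [hδdef]; exact le_trans (min_le_left _ _) (min_le_right _ _)
      linarith
    have hcl := hcloseg h3 hdist
    rw [Real.dist_eq] at hcl
    have hcl2 := (abs_lt.mp hcl).2
    have hmle : m ≤ -g'' L / 2 := by rw [hmdef]; exact min_le_right _ _
    linarith
  -- Lipschitz bounds on the region
  have hflip : ∀ s, L - δ < s → s ≤ L → y₁ ≤ s → ∀ t, L - δ < t → t ≤ L → y₁ ≤ t →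
      |f'' s - f'' t| ≤ K * |s - t| := by
    intro s hs1 hs2 hs3 t ht1 ht2 ht3
    have hδε : δ ≤ εf := by rw [hδdef]; exact le_trans (min_le_right _ _) (min_le_left _ _)
    have hsmem : s ∈ Set.Icc (L - εf) (L + εf) ∩ Set.Ici y₁ :=
      ⟨⟨by linarith, by linarith⟩, hs3⟩
    have htmem : t ∈ Set.Icc (L - εf) (L + εf) ∩ Set.Ici y₁ :=
      ⟨⟨by linarith, by linarith⟩, ht3⟩
    have hd := hKf.dist_le_mul s hsmem t htmem
    rw [Real.dist_eq, Real.dist_eq] at hd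
    calc |f'' s - f'' t| ≤ (Kf:ℝ) * |s - t| := hd
      _ ≤ K * |s - t| := mul_le_mul_of_nonneg_right (by rw [hKdef]; exact le_max_left _ _) (abs_nonneg _)
  have hglip : ∀ s, L - δ < s → s ≤ L → y₁ ≤ s → ∀ t, L - δ < t → t ≤ L → y₁ ≤ t →
      |g'' s - g'' t| ≤ K * |s - t| := by
    intro s hs1 hs2 hs3 t ht1 ht2 ht3
    have hδε : δ ≤ εg := by rw [hδdef]; exact le_trans (min_le_right _ _) (min_le_right _ _)
    have hsmem : s ∈ Set.Icc (L - εg) (L + εg) ∩ Set.Ici y₁ :=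
      ⟨⟨by linarith, by linarith⟩, hs3⟩
    have htmem : t ∈ Set.Icc (L - εg) (L + εg) ∩ Set.Ici y₁ :=
      ⟨⟨by linarith, by linarith⟩, ht3⟩
    have hd := hKg.dist_le_mul s hsmem t htmem
    rw [Real.dist_eq, Real.dist_eq] at hd
    calc |g'' s - g'' t| ≤ (Kg:ℝ) * |s - t| := hd
      _ ≤ K * |s - t| := mul_le_mul_of_nonneg_right (by rw [hKdef]; exact le_max_right _ _) (abs_nonneg _)
  have hexist : ∀ ε : ℝ, 0 < ε → ∃ n, L - ε < z n := by
    intro ε hε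
    by_contra hno; push_neg at hno
    have h2 : (⨆ n, z n) ≤ L - ε := ciSup_le hno
    rw [← hLdef] at h2
    linarith
  obtain ⟨n₀, hn₀⟩ := hexist δ hδ0
  obtain ⟨N, hNdef⟩ : ∃ N : ℕ, N = n₀ + 2 := ⟨_, rfl⟩
  have hreg : ∀ k, N ≤ k → y₁ < y k ∧ L - δ < y k ∧ y k ≤ L := by
    intro k hk
    have hk1 : 1 ≤ k := by omega
    refine ⟨?_, ?_, hyle k hk1⟩
    · calc y₁ = y 1 := hy1.symm
        _ = z 0 := by rw [hz]
        _ < z (k-1) := hzmono (by omega)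
        _ = y k := (hyz k hk1).symm
    · rw [hyz k hk1]
      exact lt_of_lt_of_le hn₀ (hzmono.monotone (by omega))
  -- the midpoint estimate at every step
  have hstep : ∀ k, N ≤ k →
      |y (k+1) - (y k + y (k+2))/2| ≤ K * (y (k+2) - y k)^2 / (12*m) := by
    intro k hk
    have hk1 : 1 ≤ k := by omega
    obtain ⟨h1, h2, h3⟩ := hreg k hk
    obtain ⟨h1'', h2'', h3''⟩ := hreg (k+2) (by omega)
    have hlt : y k < y (k+2) := lt_trans (hmono k hk1) (hmono (k+1) (by omega))
    have hsubIcc : Set.Icc (y k) (y (k+2)) ⊆ Set.Ici y₁ := fun s hs => le_trans h1.le hs.1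
    rcases Nat.even_or_odd k with he | ho
    · obtain ⟨n, hn⟩ := he
      have hn1 : 1 ≤ n := by omega
      have heq := hb n hn1
      have e2 : 2*n + 2 = k + 2 := by omega
      have e1 : 2*n + 1 = k + 1 := by omega
      have e0 : 2*n = k := by omega
      rw [e2, e1, e0] at heq
      exact key_tangent y₁ m K (y k) (y (k+2)) (y (k+1)) g g' g''
        hg1' hg2' (hg2c.mono hsubIcc) h1 hlt hm0
        (fun s hs => hgm s (lt_of_lt_of_le h2 hs.1) (le_trans hs.2 h3'') (hsubIcc hs))
        (fun s hs t ht => hglip s (lt_of_lt_of_le h2 hs.1) (le_trans hs.2 h3'') (hsubIcc hs)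
          t (lt_of_lt_of_le h2 ht.1) (le_trans ht.2 h3'') (hsubIcc ht))
        heq
    · obtain ⟨t, ht⟩ := ho
      set n : ℕ := t + 1 with hndef
      have hn1 : 1 ≤ n := by omega
      have heq := ha n hn1
      have em : 2*n - 1 = k := by omega
      have e1 : 2*n + 1 = k + 2 := by omega
      have e0 : 2*n = k + 1 := by omega
      rw [em, e1, e0] at heq
      exact key_tangent y₁ m K (y k) (y (k+2)) (y (k+1)) f f' f''
        hf1' hf2' (hf2c.mono hsubIcc) h1 hlt hm0
        (fun s hs => hfm s (lt_of_lt_of_le h2 hs.1) (le_trans hs.2 h3'') (hsubIcc hs))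
        (fun s hs t' ht' => hflip s (lt_of_lt_of_le h2 hs.1) (le_trans hs.2 h3'') (hsubIcc hs)
          t' (lt_of_lt_of_le h2 ht'.1) (le_trans ht'.2 h3'') (hsubIcc ht'))
        heq
  -- gap sequence
  obtain ⟨d, hd⟩ : ∃ d : ℕ → ℝ, ∀ k, d k = y (k+1) - y k := ⟨_, fun _ => rfl⟩
  have hdpos : ∀ k, 1 ≤ k → 0 < d k := fun k hk => by
    rw [hd]; exact sub_pos.mpr (hmono k hk)
  obtain ⟨A, hAdef⟩ : ∃ A : ℝ, A = K / (3*m) := ⟨_, rfl⟩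
  have hA0 : 0 ≤ A := by rw [hAdef]; positivity
  have hAbs : ∀ k, N ≤ k → |d (k+1) - d k| ≤ A * (d k^2 + d (k+1)^2) := by
    intro k hk
    have hst := hstep k hk
    have hsum : y (k+2) - y k = d k + d (k+1) := by rw [hd, hd]; ring
    have heq2 : d (k+1) - d k = 2 * ((y k + y (k+2))/2 - y (k+1)) := by
      rw [hd, hd]; ring
    have h2q : (d k + d (k+1))^2 ≤ 2*(d k^2 + d (k+1)^2) := by
      nlinarith [sq_nonneg (d k - d (k+1))]
    calc |d (k+1) - d k| = 2 * |y (k+1) - (y k + y (k+2))/2| := by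
          rw [heq2, abs_mul, abs_two, abs_sub_comm]
      _ ≤ 2 * (K * (y (k+2) - y k)^2 / (12*m)) := by linarith
      _ = K/(6*m) * (d k + d (k+1))^2 := by rw [hsum]; ring
      _ ≤ K/(6*m) * (2*(d k^2 + d (k+1)^2)) :=
          mul_le_mul_of_nonneg_left h2q (by positivity)
      _ = A * (d k^2 + d (k+1)^2) := by rw [hAdef]; ring
  obtain ⟨n₁, hn₁⟩ := hexist (1/(8*A+1)) (by positivity)
  obtain ⟨N₁, hN₁def⟩ : ∃ N₁ : ℕ, N₁ = max N (n₁ + 2) := ⟨_, rfl⟩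
  have hN₁N : N ≤ N₁ := by rw [hN₁def]; exact le_max_left _ _
  have hN₁1 : 1 ≤ N₁ := by omega
  obtain ⟨τ, hτdef⟩ : ∃ τ : ℝ, τ = L - y N₁ := ⟨_, rfl⟩
  have hτ0 : 0 ≤ τ := by rw [hτdef]; exact sub_nonneg.mpr (hyle N₁ hN₁1)
  have hτlt : τ < 1/(8*A+1) := by
    have h1 : z n₁ ≤ y N₁ := by
      rw [hyz N₁ hN₁1]
      exact hzmono.monotone (by omega)
    rw [hτdef]; linarith
  have hAτ : A * τ ≤ 1/8 := by
    have h1 : τ * (8*A+1) < 1 := (lt_div_iff₀ (by positivity)).mp hτlt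
    exact aux_Atau A τ hτ0 h1
  have hdτ : ∀ k, N₁ ≤ k → d k ≤ τ := by
    intro k hk
    have h1 : y (k+1) ≤ L := hyle (k+1) (by omega)
    have h2 : y N₁ ≤ y k := hyy N₁ k hN₁1 hk
    rw [hd, hτdef]; linarith
  have hupper : ∀ k, N₁ ≤ k → d (k+1) ≤ 2 * d k := by
    intro k hk
    have hbnd := hAbs k (le_trans hN₁N hk)
    have h2 : A * d k ≤ 1/8 := le_trans (mul_le_mul_of_nonneg_left (hdτ k hk) hA0) hAτ
    have h3 : A * d (k+1) ≤ 1/8 :=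
      le_trans (mul_le_mul_of_nonneg_left (hdτ (k+1) (by omega)) hA0) hAτ
    have p0 : 0 < d k := hdpos k (by omega)
    have p1 : 0 < d (k+1) := hdpos (k+1) (by omega)
    have hΔ := (abs_le.mp hbnd).2
    exact aux_step_upper A (d k) (d (k+1)) p0 p1 h2 h3 hΔ
  have hlower : ∀ k, N₁ ≤ k → d k * (1 - A*(d k + 2*d (k+1))) ≤ d (k+1) := by
    intro k hk
    have hbnd := hAbs k (le_trans hN₁N hk)
    have hup := hupper k hk
    have p0 : 0 < d k := hdpos k (by omega)
    have p1 : 0 < d (k+1) := hdpos (k+1) (by omega)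
    have hΔ := (abs_le.mp hbnd).1
    exact aux_step_lower A (d k) (d (k+1)) hA0 p1 hup hΔ
  obtain ⟨E, hE⟩ : ∃ E : ℕ → ℝ, ∀ j, E j = A * ((y (N₁+j) - y N₁) + 2*(y (N₁+j+1) - y (N₁+1))) :=
    ⟨_, fun _ => rfl⟩
  have hE0 : E 0 = 0 := by rw [hE]; norm_num
  have hEnonneg : ∀ j, 0 ≤ E j := by
    intro j
    have h1 : y N₁ ≤ y (N₁+j) := hyy N₁ (N₁+j) hN₁1 (by omega)
    have h2 : y (N₁+1) ≤ y (N₁+j+1) := hyy (N₁+1) (N₁+j+1) (by omega) (by omega)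
    rw [hE]
    have : (0:ℝ) ≤ (y (N₁+j) - y N₁) + 2*(y (N₁+j+1) - y (N₁+1)) := by linarith
    exact mul_nonneg hA0 this
  have hEle : ∀ j, E j ≤ 3/8 := by
    intro j
    have h1 : y (N₁+j) - y N₁ ≤ τ := by
      have := hyle (N₁+j) (by omega); rw [hτdef]; linarith
    have h2 : y (N₁+j+1) - y (N₁+1) ≤ τ := by
      have h3 := hyle (N₁+j+1) (by omega)
      have h4 : y N₁ ≤ y (N₁+1) := hyy N₁ (N₁+1) hN₁1 (by omega)
      rw [hτdef]; linarith
    have h5 : y N₁ ≤ y (N₁+j) := hyy N₁ (N₁+j) hN₁1 (by omega)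
    have h6 : y (N₁+1) ≤ y (N₁+j+1) := hyy (N₁+1) (N₁+j+1) (by omega) (by omega)
    have hp : A * ((y (N₁+j) - y N₁) + 2*(y (N₁+j+1) - y (N₁+1))) ≤ A * (3*τ) := by
      apply mul_le_mul_of_nonneg_left _ hA0
      linarith
    rw [hE]
    calc A * ((y (N₁+j) - y N₁) + 2*(y (N₁+j+1) - y (N₁+1))) ≤ A * (3*τ) := hp
      _ = 3*(A*τ) := by ring
      _ ≤ 3/8 := by linarith
  have hEstep : ∀ j, E (j+1) = E j + A*(d (N₁+j) + 2*d (N₁+j+1)) := by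
    intro j
    simp only [hE, hd]
    have e1 : N₁ + (j+1) = N₁ + j + 1 := by omega
    rw [e1]; ring
  have hind : ∀ j, d N₁ * (1 - E j) ≤ d (N₁ + j) := by
    intro j
    induction j with
    | zero => rw [hE0]; norm_num
    | succ j ih =>
      have hk : N₁ ≤ N₁ + j := Nat.le_add_right _ _
      have hlow := hlower (N₁+j) hk
      have p0 : 0 < d (N₁+j) := hdpos _ (by omega)
      have p1 : 0 < d (N₁+j+1) := hdpos _ (by omega)
      have pd : 0 < d N₁ := hdpos _ hN₁1
      have he0 : 0 ≤ A*(d (N₁+j) + 2*d (N₁+j+1)) := mul_nonneg hA0 (by linarith)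
      have he38 : A*(d (N₁+j) + 2*d (N₁+j+1)) ≤ 3/8 := by
        have t1 : A * d (N₁+j) ≤ 1/8 :=
          le_trans (mul_le_mul_of_nonneg_left (hdτ _ hk) hA0) hAτ
        have t2 : A * d (N₁+j+1) ≤ 1/8 :=
          le_trans (mul_le_mul_of_nonneg_left (hdτ _ (by omega)) hA0) hAτ
        have hr : A*(d (N₁+j) + 2*d (N₁+j+1)) = A*d (N₁+j) + 2*(A*d (N₁+j+1)) := by ring
        linarith
      have hfac : (0:ℝ) ≤ 1 - A*(d (N₁+j) + 2*d (N₁+j+1)) := by linarith [he38]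
      have hE1 : E (j+1) = E j + A*(d (N₁+j) + 2*d (N₁+j+1)) := hEstep j
      have s1 : d N₁*(1-E j)*(1 - A*(d (N₁+j) + 2*d (N₁+j+1)))
          ≤ d (N₁+j)*(1 - A*(d (N₁+j) + 2*d (N₁+j+1))) :=
        mul_le_mul_of_nonneg_right ih hfac
      have s3 : d N₁*(1 - E (j+1)) ≤ d N₁*(1-E j)*(1 - A*(d (N₁+j) + 2*d (N₁+j+1))) := by
        rw [hE1]
        exact aux_prod_step (d N₁) (E j) (A*(d (N₁+j) + 2*d (N₁+j+1))) pd.le (hEnonneg j) he0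
      have e1 : N₁ + (j+1) = N₁ + j + 1 := by omega
      rw [e1]
      linarith
  have hfinal : ∀ j, (5/8) * d N₁ ≤ d (N₁ + j) := by
    intro j
    have pd : 0 < d N₁ := hdpos _ hN₁1
    have hE58 : (5/8:ℝ) ≤ 1 - E j := by linarith [hEle j]
    have h58 : d N₁ * (5/8) ≤ d N₁ * (1 - E j) :=
      mul_le_mul_of_nonneg_left hE58 pd.le
    linarith [hind j]
  -- d (N₁ + j + 1) → 0 gives the contradiction
  have t1 : Tendsto (fun j => z (N₁+j+1)) atTop (nhds L) := by
    have hfe : (fun j => z (N₁+j+1)) = (fun j : ℕ => z (j + (N₁+1))) := by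
      funext j; congr 1; omega
    rw [hfe]
    exact htend.comp (tendsto_add_atTop_nat (N₁+1))
  have t2 : Tendsto (fun j => z (N₁+j)) atTop (nhds L) := by
    have hfe : (fun j => z (N₁+j)) = (fun j : ℕ => z (j + N₁)) := by
      funext j; congr 1; omega
    rw [hfe]
    exact htend.comp (tendsto_add_atTop_nat N₁)
  have t3 : Tendsto (fun j => d (N₁+j+1)) atTop (nhds 0) := by
    have hfe : (fun j => d (N₁+j+1)) = fun j => z (N₁+j+1) - z (N₁+j) := by
      funext j; rw [hd, hz]
    rw [hfe]
    have := t1.sub t2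
    simpa using this
  have pd : 0 < d N₁ := hdpos _ hN₁1
  have hev : ∀ᶠ j in atTop, d (N₁+j+1) < (5/8) * d N₁ :=
    t3.eventually_lt_const (by positivity)
  obtain ⟨j, hj⟩ := hev.exists
  have := hfinal (j+1)
  have e1 : N₁ + (j+1) = N₁ + j + 1 := by omega
  rw [e1] at this
  linarith
end

section
/- Let m > 1 and ρ < 0 be real numbers, and set θ = ((1 − m^ρ)/((−ρ)(m − 1)))^{1/(1−ρ)}. Then 1/m < θ < 1. -/
/-- Bernoulli's inequality for negative exponents: for `x > -1`, `x ≠ 0`,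
`ρ < 0`, we have `1 + ρ x < (1 + x) ^ ρ`. -/
lemma bernoulli_neg {x ρ : ℝ} (hx : -1 < x) (hx0 : x ≠ 0) (hρ : ρ < 0) :
    1 + ρ * x < (1 + x) ^ ρ := by
  have h1 : (0:ℝ) < 1 + x := by linarith
  have hlog : Real.log (1 + x) < x := by
    have := Real.log_lt_sub_one_of_pos h1 (by intro h; apply hx0; linarith)
    linarith
  have hlogne : Real.log (1 + x) ≠ 0 := by
    rcases hx0.lt_or_gt with h | h
    · exact (Real.log_neg (by linarith) (by linarith)).ne
    · exact (Real.log_pos (by linarith)).ne'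
  have hexp : Real.log (1 + x) * ρ + 1 < Real.exp (Real.log (1 + x) * ρ) :=
    Real.add_one_lt_exp (mul_ne_zero hlogne hρ.ne)
  rw [Real.rpow_def_of_pos h1]
  have : ρ * x < Real.log (1 + x) * ρ := by nlinarith
  linarith

/-- For `m > 1` and `ρ < 0`, `θ = ((1 − m^ρ)/((−ρ)(m−1)))^{1/(1−ρ)}`
satisfies `1/m < θ < 1`. -/
theorem theta_bounds
    (m ρ : ℝ) (hm : 1 < m) (hρ : ρ < 0) :
    1/m < ((1 - m ^ ρ) / ((-ρ) * (m - 1))) ^ (1/(1 - ρ)) ∧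
    ((1 - m ^ ρ) / ((-ρ) * (m - 1))) ^ (1/(1 - ρ)) < 1 := by
  have hm0 : (0:ℝ) < m := by linarith
  have hm1 : (0:ℝ) < m - 1 := by linarith
  have ha1 : m ^ ρ < 1 := Real.rpow_lt_one_of_one_lt_of_neg hm hρ
  have ha0 : (0:ℝ) < m ^ ρ := Real.rpow_pos_of_pos hm0 ρ
  have hden : (0:ℝ) < (-ρ) * (m - 1) := mul_pos (by linarith) hm1
  have hexp : (0:ℝ) < 1/(1 - ρ) := by
    apply div_pos one_pos; linarith
  -- Bernoulli at x = m - 1 : 1 + ρ(m-1) < m^ρ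
  have hB1 : 1 + ρ * (m - 1) < m ^ ρ := by
    have := bernoulli_neg (x := m - 1) (by linarith) (by linarith) hρ
    simpa [show 1 + (m - 1) = m by ring] using this
  have hA1 : (1 - m ^ ρ) / ((-ρ) * (m - 1)) < 1 := by
    rw [div_lt_one hden]; nlinarith
  have hA0 : 0 < (1 - m ^ ρ) / ((-ρ) * (m - 1)) :=
    div_pos (by linarith) hden
  constructor
  · -- lower bound
    -- Bernoulli at x = 1/m - 1 : 1 + ρ(1/m - 1) < (1/m)^ρ = (m^ρ)⁻¹
    have hB2 : 1 + ρ * (1/m - 1) < (m ^ ρ)⁻¹ := by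
      have h := bernoulli_neg (x := 1/m - 1) (by
          have : (0:ℝ) < 1/m := by positivity
          linarith)
        (by
          have : 1/m < 1 := by rw [div_lt_one hm0]; linarith
          intro h; rw [sub_eq_zero] at h; linarith) hρ
      have e : ((1:ℝ) + (1/m - 1)) = m⁻¹ := by field_simp; ring
      rwa [e, Real.inv_rpow hm0.le] at h
    have hb : m ^ (ρ - 1) * m = m ^ ρ := by
      rw [← Real.rpow_add_one hm0.ne' (ρ - 1)]; norm_num
    have hb0 : (0:ℝ) < m ^ (ρ - 1) := Real.rpow_pos_of_pos hm0 _
    have key : m ^ (ρ - 1) < (1 - m ^ ρ) / ((-ρ) * (m - 1)) := by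
      rw [lt_div_iff₀ hden]
      have h5 : m ^ ρ * (1 + ρ * (1/m - 1)) < m ^ ρ * (m ^ ρ)⁻¹ :=
        mul_lt_mul_of_pos_left hB2 ha0
      rw [mul_inv_cancel₀ ha0.ne'] at h5
      have h7 : m ^ ρ * (1/m) = m ^ (ρ - 1) := by
        field_simp [← hb]
        rw [← hb]; ring
      nlinarith [h7]
    have e2 : ((m:ℝ) ^ (ρ - 1)) ^ (1/(1 - ρ)) = 1/m := by
      rw [← Real.rpow_mul hm0.le]
      have : (ρ - 1) * (1/(1 - ρ)) = -1 := by
        rw [mul_one_div, div_eq_iff (by linarith : (1:ℝ) - ρ ≠ 0)]; ring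
      rw [this, Real.rpow_neg_one, one_div]
    calc 1/m = ((m:ℝ) ^ (ρ - 1)) ^ (1/(1 - ρ)) := e2.symm
      _ < ((1 - m ^ ρ) / ((-ρ) * (m - 1))) ^ (1/(1 - ρ)) :=
        Real.rpow_lt_rpow hb0.le key hexp
  · exact Real.rpow_lt_one hA0.le hA1 hexp
end

section
/- Let r > b, σ > 0, m > 1, l > 0, let ρ < 0 be the negative root of (σ²/2)ρ(ρ−1) + bρ − r = 0, set x_R = (ρ/(ρ−1))(r − b) l, α = x_R/m, and θ = ((1 − m^ρ)/((−ρ)(m − 1)))^{1/(1−ρ)}. Then x = θ x_R is a solution in (α, x_R) of the equation (x/x_R)^ρ · (l − x_R/(r−b)) = ((m−1)/(r−b)) x + (l/(1−ρ)) (x/α)^ρ. -/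
/-- `x = θ x_R` solves the indifference equation
`(x/x_R)^ρ (l − x_R/(r−b)) = ((m−1)/(r−b)) x + (l/(1−ρ)) (x/α)^ρ`
and lies in `(α, x_R)`. -/
theorem indifference_threshold_solution
    (r b σ m l ρ : ℝ)
    (hrb : b < r) (hσ : 0 < σ) (hm : 1 < m) (hl : 0 < l) (hρ : ρ < 0)
    (hroot : σ^2/2 * (ρ * (ρ - 1)) + b * ρ - r = 0)
    (xR α θ : ℝ)
    (hxR : xR = ρ/(ρ - 1) * (r - b) * l) (hα : α = xR/m)
    (hθ : θ = ((1 - m ^ ρ) / ((-ρ) * (m - 1))) ^ (1/(1 - ρ))) :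
    α < θ * xR ∧ θ * xR < xR ∧
    (θ * xR / xR) ^ ρ * (l - xR/(r - b))
      = (m - 1)/(r - b) * (θ * xR) + l/(1 - ρ) * ((θ * xR)/α) ^ ρ := by
  have hm0 : (0:ℝ) < m := lt_trans one_pos hm
  have hs : (0:ℝ) < 1 - ρ := by linarith
  have hnρ : (0:ℝ) < -ρ := by linarith
  have hd : (0:ℝ) < (-ρ) * (m - 1) := mul_pos hnρ (by linarith)
  have hmρpos : 0 < m ^ ρ := Real.rpow_pos_of_pos hm0 ρ
  have hmρlt : m ^ ρ < 1 := Real.rpow_lt_one_of_one_lt_of_neg hm hρ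
  have hnum : 0 < 1 - m ^ ρ := by linarith
  set A : ℝ := (1 - m ^ ρ) / ((-ρ) * (m - 1)) with hA
  have hApos : 0 < A := div_pos hnum hd
  have hθpos : 0 < θ := by rw [hθ]; positivity
  have hxRpos : 0 < xR := by
    rw [hxR]
    have h1 : 0 < ρ/(ρ-1) := div_pos_of_neg_of_neg hρ (by linarith)
    have h2 : 0 < r - b := by linarith
    positivity
  have hθpow : θ ^ (1 - ρ) = A := by
    rw [hθ, ← Real.rpow_mul hApos.le, one_div, inv_mul_cancel₀ (ne_of_gt hs),
      Real.rpow_one]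
  have hlog : Real.log m < m - 1 := Real.log_lt_sub_one_of_pos hm0 (ne_of_gt hm)
  have h1 : 1 + Real.log m * ρ ≤ m ^ ρ := by
    rw [Real.rpow_def_of_pos hm0]
    linarith [Real.add_one_le_exp (Real.log m * ρ)]
  have key1 : 1 - m ^ ρ < (-ρ) * (m - 1) := by nlinarith
  -- m * log m > m - 1
  have hmul : m - 1 < m * Real.log m := by
    have h := Real.log_lt_sub_one_of_pos (x := m⁻¹) (by positivity)
      (by rw [Ne, inv_eq_one]; exact ne_of_gt hm)
    rw [Real.log_inv] at h
    nlinarith [mul_inv_cancel₀ (ne_of_gt hm0)]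
  have h2 : 1 + Real.log m * (-ρ) ≤ m ^ (-ρ) := by
    rw [Real.rpow_def_of_pos hm0]
    linarith [Real.add_one_le_exp (Real.log m * (-ρ))]
  have hsplit : m ^ (1 - ρ) = m * m ^ (-ρ) := by
    rw [show (1:ℝ) - ρ = 1 + (-ρ) by ring, Real.rpow_add hm0, Real.rpow_one]
  have key2 : (-ρ) * (m - 1) + m < m ^ (1 - ρ) := by
    rw [hsplit]; nlinarith
  -- θ < 1
  have hA1 : A < 1 := (div_lt_one hd).mpr key1
  have hθlt1 : θ < 1 := by
    rw [hθ]
    exact Real.rpow_lt_one hApos.le hA1 (by positivity)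
  -- θ > 1/m
  have hmρ1pos : 0 < m ^ (ρ - 1) := Real.rpow_pos_of_pos hm0 _
  have e1 : m ^ (ρ - 1) * m ^ (1 - ρ) = 1 := by
    rw [← Real.rpow_add hm0]; norm_num
  have e2 : m ^ (ρ - 1) * m = m ^ ρ := by
    rw [← Real.rpow_add_one (ne_of_gt hm0) (ρ - 1)]; ring_nf
  have hm2 : m ^ (ρ - 1) < A := by
    rw [hA, lt_div_iff₀ hd]
    nlinarith [mul_lt_mul_of_pos_left key2 hmρ1pos]
  have hθgt : 1/m < θ := by
    have h3 : (m ^ (ρ - 1)) ^ (1/(1 - ρ)) = 1/m := by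
      rw [← Real.rpow_mul hm0.le,
        show (ρ - 1) * (1/(1 - ρ)) = -1 by field_simp; ring,
        Real.rpow_neg_one, one_div]
    calc 1/m = (m ^ (ρ - 1)) ^ (1/(1 - ρ)) := h3.symm
      _ < A ^ (1/(1 - ρ)) := Real.rpow_lt_rpow hmρ1pos.le hm2 (by positivity)
      _ = θ := hθ.symm
  refine ⟨?_, ?_, ?_⟩
  · rw [hα]
    calc xR/m = 1/m * xR := by ring
      _ < θ * xR := mul_lt_mul_of_pos_right hθgt hxRpos
  · calc θ * xR < 1 * xR := mul_lt_mul_of_pos_right hθlt1 hxRpos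
      _ = xR := one_mul xR
  · -- the equation
    have hrb' : r - b ≠ 0 := by linarith
    have hρ1 : ρ - 1 ≠ 0 := by linarith
    have hxRne : xR ≠ 0 := ne_of_gt hxRpos
    have hd1 : θ * xR / xR = θ := by field_simp
    have hd2 : θ * xR / α = θ * m := by
      rw [hα]; field_simp
    have hd3 : l - xR/(r - b) = l/(1 - ρ) := by
      rw [hxR]; field_simp; ring
    rw [hd1, hd2, hd3, Real.mul_rpow hθpos.le hm0.le]
    -- key identity: θ^ρ * (1 - m^ρ) = (-ρ)*(m-1)*θ
    have hkey : θ ^ ρ * (1 - m ^ ρ) = (-ρ) * (m - 1) * θ := by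
      have h4 : θ ^ ρ * θ ^ (1 - ρ) = θ := by
        rw [← Real.rpow_add hθpos]; norm_num
      rw [hθpow, hA, ← mul_div_assoc, div_eq_iff (ne_of_gt hd)] at h4
      linear_combination h4
    have hd4 : (m - 1)/(r - b) * (θ * xR) = (m - 1) * (-ρ)/(1 - ρ) * θ * l := by
      rw [hxR]; field_simp; ring
    rw [hd4]
    linear_combination (l/(1 - ρ)) * hkey
end

section
/- Let 0 < l¹ ≤ l², let ρ⁻ < 0 < 1 < ρ⁺ with γ = ρ⁺ − ρ⁻ > 0, let 0 < θ < 1, and let x̄ > 0. Define B = (ρ⁻ x̄^{−ρ⁺} / γ)(θ l¹ − l²) and C = (ρ⁺ x̄^{−ρ⁻} / γ)(l² − θ ((ρ⁺ − 1)/ρ⁺)(ρ⁻/(ρ⁻ − 1)) l¹). Then B > 0 and C > 0. -/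
/-- Positivity of the coefficients `B` and `C` in the representation
`T = Bψ + Cφ` of the tangent solution in the duopoly exit game. -/
theorem tangent_solution_coefficients_pos
    (l1 l2 ρm ρp θ xb : ℝ)
    (hl1 : 0 < l1) (hl12 : l1 ≤ l2)
    (hρm : ρm < 0) (hρp : 1 < ρp)
    (hγ : 0 < ρp - ρm)
    (hθ0 : 0 < θ) (hθ1 : θ < 1) (hxb : 0 < xb) :
    0 < ρm * xb ^ (-ρp) / (ρp - ρm) * (θ * l1 - l2) ∧
    0 < ρp * xb ^ (-ρm) / (ρp - ρm)
        * (l2 - θ * ((ρp - 1)/ρp) * (ρm/(ρm - 1)) * l1) := by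
  have hxp : (0:ℝ) < xb ^ (-ρp) := Real.rpow_pos_of_pos hxb _
  have hxm : (0:ℝ) < xb ^ (-ρm) := Real.rpow_pos_of_pos hxb _
  constructor
  · have h1 : θ * l1 - l2 < 0 := by nlinarith
    have h2 : ρm * xb ^ (-ρp) / (ρp - ρm) < 0 := by
      apply div_neg_of_neg_of_pos _ hγ
      exact mul_neg_of_neg_of_pos hρm hxp
    exact mul_pos_of_neg_of_neg h2 h1
  · have hc1 : (ρp - 1)/ρp < 1 := by
      rw [div_lt_one (by linarith)]; linarith
    have hc1' : 0 < (ρp - 1)/ρp := div_pos (by linarith) (by linarith)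
    have hc2 : ρm/(ρm - 1) < 1 := by
      rw [div_lt_one_of_neg (by linarith)]; linarith
    have hc2' : 0 < ρm/(ρm - 1) := div_pos_of_neg_of_neg hρm (by linarith)
    have hA : θ * ((ρp - 1)/ρp) < 1 := by nlinarith
    have hB : θ * ((ρp - 1)/ρp) * (ρm/(ρm - 1)) < 1 := by
      nlinarith [mul_pos hθ0 hc1']
    have h3 : θ * ((ρp - 1)/ρp) * (ρm/(ρm - 1)) * l1 < l2 := by
      calc θ * ((ρp - 1)/ρp) * (ρm/(ρm - 1)) * l1 < 1 * l1 :=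
            mul_lt_mul_of_pos_right hB hl1
        _ = l1 := one_mul l1
        _ ≤ l2 := hl12
    have h4 : 0 < ρp * xb ^ (-ρm) / (ρp - ρm) :=
      div_pos (mul_pos (by linarith) hxm) hγ
    exact mul_pos h4 (by linarith)
end
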